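/- arXiv:2206.14668 — 2 statements merged into one kernel-verified Lean document; each statement's English description precedes it below -/
import Mathlib

section
/- Let μ, γ₁, γ₂ ∈ ℝ³ with ‖γ₁‖ = ‖γ₂‖ = 1, let κ, α ∈ ℝ, and define u : ℝ³ → ℝ by u(x) = κ⟨μ, x⟩ + α(⟨γ₁, x⟩² − ⟨γ₂, x⟩²) (the log unnormalized Kent density). Then for every x ∈ ℝ³ with ‖x‖ = 1, the Laplace–Beltrami operator applied to u satisfies Δ_M u(x) = −2κ⟨μ, x⟩ − 6α(⟨γ₁, x⟩² − ⟨γ₂, x⟩²), where Δ_M u(x) := tr(P(x)·J(x)), P(y) = I₃ − yyᵀ, and J(x) is the Jacobian at x of the map y ↦ P(y)∇u(y). -/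
open Real
open scoped RealInnerProductSpace

noncomputable section

/-- Euclidean 3-space. -/
abbrev E3 : Type := EuclideanSpace ℝ (Fin 3)

/-- The orthogonal projection matrix `P(x) = I₃ - x xᵀ` applied to a vector `v`. -/
def sphProj (x v : E3) : E3 := v - (⟪x, v⟫) • x

/-- `tr (P(x) ⬝ J(x))` where `J(x)` is the Jacobian matrix at `x` of `F : ℝ³ → ℝ³`
(using symmetry of `P(x)`: `tr (P J) = ∑ i ⟪P eᵢ, J eᵢ⟫`). -/
def trProjJac (F : E3 → E3) (x : E3) : ℝ :=
  ∑ i : Fin 3, ⟪sphProj x (EuclideanSpace.single i 1), fderiv ℝ F x (EuclideanSpace.single i 1)⟫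

/-- The Laplace–Beltrami operator on the unit sphere `S² ⊂ ℝ³`:
`Δ_M u (x) = tr (P(x) ⬝ J(x))` where `J(x)` is the Jacobian at `x` of `y ↦ P(y) ∇u(y)`. -/
def lapBel (u : E3 → ℝ) (x : E3) : ℝ :=
  trProjJac (fun y => sphProj y (gradient u y)) x

/-- **Laplace–Beltrami operator applied to the log unnormalized Kent density:**
for unit axes `γ₁, γ₂` and unit `x`,
`Δ_M u(x) = −2κ⟨μ,x⟩ − 6α(⟨γ₁,x⟩² − ⟨γ₂,x⟩²)`. -/
theorem kent_laplace_beltrami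
    (μ γ₁ γ₂ : E3) (hγ₁ : ‖γ₁‖ = 1) (hγ₂ : ‖γ₂‖ = 1) (κ α : ℝ)
    (u : E3 → ℝ) (hu : ∀ x, u x = κ * ⟪μ, x⟫ + α * (⟪γ₁, x⟫ ^ 2 - ⟪γ₂, x⟫ ^ 2))
    (x : E3) (hx : ‖x‖ = 1) :
    lapBel u x = -2 * (κ * ⟪μ, x⟫) - 6 * (α * (⟪γ₁, x⟫ ^ 2 - ⟪γ₂, x⟫ ^ 2)) := by
  set L : E3 →L[ℝ] E3 := (2*α) • ((innerSL ℝ γ₁).smulRight γ₁ - (innerSL ℝ γ₂).smulRight γ₂)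
    with hL
  set g : E3 → E3 := fun y => κ • μ + L y with hg
  -- Step 1: the gradient of `u`.
  have hgrad : ∀ y : E3, gradient u y = g y := by
    intro y
    apply HasGradientAt.gradient
    rw [hasGradientAt_iff_hasFDerivAt]
    have h1 : HasFDerivAt (fun z : E3 => κ * ⟪μ, z⟫) (κ • innerSL ℝ μ) y :=
      ((innerSL ℝ μ).hasFDerivAt).const_mul κ
    have h2 : HasFDerivAt (fun z : E3 => ⟪γ₁, z⟫ ^ 2)
        (⟪γ₁, y⟫ • innerSL ℝ γ₁ + ⟪γ₁, y⟫ • innerSL ℝ γ₁) y := by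
      have := ((innerSL ℝ γ₁).hasFDerivAt (x := y)).mul ((innerSL ℝ γ₁).hasFDerivAt (x := y))
      simpa [sq, Pi.mul_def] using this
    have h3 : HasFDerivAt (fun z : E3 => ⟪γ₂, z⟫ ^ 2)
        (⟪γ₂, y⟫ • innerSL ℝ γ₂ + ⟪γ₂, y⟫ • innerSL ℝ γ₂) y := by
      have := ((innerSL ℝ γ₂).hasFDerivAt (x := y)).mul ((innerSL ℝ γ₂).hasFDerivAt (x := y))
      simpa [sq, Pi.mul_def] using this
    have h4 := h1.add (((h2.sub h3)).const_mul α)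
    have hueq : u = fun z : E3 => κ * ⟪μ, z⟫ +
        α * ((fun z : E3 => ⟪γ₁, z⟫ ^ 2) z - (fun z : E3 => ⟪γ₂, z⟫ ^ 2) z) := by
      funext z; exact hu z
    rw [hueq]
    refine h4.congr_fderiv ?_
    ext v
    simp only [hg, hL, ContinuousLinearMap.add_apply, ContinuousLinearMap.smul_apply,
      ContinuousLinearMap.sub_apply, ContinuousLinearMap.smulRight_apply, innerSL_apply_apply,
      inner_add_left, real_inner_smul_left, inner_sub_left, smul_eq_mul,
      InnerProductSpace.toDual_apply_apply]
    ring
  -- Step 2: rewrite the projected gradient field.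
  have hFeq : (fun y : E3 => sphProj y (gradient u y)) = fun y : E3 => g y - ⟪y, g y⟫ • y := by
    funext y; rw [sphProj, hgrad y]
  -- Step 3: the Fréchet derivative of the projected gradient field at `x`.
  have hgD : HasFDerivAt g L x := (L.hasFDerivAt).const_add (κ • μ)
  have hinner : HasFDerivAt (fun y : E3 => ⟪y, g y⟫)
      ((fderivInnerCLM ℝ (x, g x)).comp ((ContinuousLinearMap.id ℝ E3).prod L)) x :=
    (hasFDerivAt_id x).inner ℝ hgD
  have hB : HasFDerivAt (fun y : E3 => ⟪y, g y⟫ • y)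
      (⟪x, g x⟫ • ContinuousLinearMap.id ℝ E3 +
        ((fderivInnerCLM ℝ (x, g x)).comp
          ((ContinuousLinearMap.id ℝ E3).prod L)).smulRight x) x :=
    hinner.smul (hasFDerivAt_id x)
  have hF := hgD.sub hB
  -- Step 4: compute.
  have hxx : x 0 * x 0 + x 1 * x 1 + x 2 * x 2 = 1 := by
    have h := real_inner_self_eq_norm_sq x
    rw [hx] at h
    simp only [PiLp.inner_apply, Fin.sum_univ_three, RCLike.inner_apply, conj_trivial, one_pow] at h
    linarith
  have hg1 : γ₁ 0 * γ₁ 0 + γ₁ 1 * γ₁ 1 + γ₁ 2 * γ₁ 2 = 1 := by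
    have h := real_inner_self_eq_norm_sq γ₁
    rw [hγ₁] at h
    simp only [PiLp.inner_apply, Fin.sum_univ_three, RCLike.inner_apply, conj_trivial, one_pow] at h
    linarith
  have hg2 : γ₂ 0 * γ₂ 0 + γ₂ 1 * γ₂ 1 + γ₂ 2 * γ₂ 2 = 1 := by
    have h := real_inner_self_eq_norm_sq γ₂
    rw [hγ₂] at h
    simp only [PiLp.inner_apply, Fin.sum_univ_three, RCLike.inner_apply, conj_trivial, one_pow] at h
    linarith
  rw [lapBel, trProjJac, hFeq]
  rw [show (fun y : E3 => g y - ⟪y, g y⟫ • y) = (g - fun y : E3 => ⟪y, g y⟫ • y) from rfl, hF.fderiv]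
  simp only [hL, hg, sphProj, Fin.sum_univ_three, ContinuousLinearMap.sub_apply,
    ContinuousLinearMap.add_apply, ContinuousLinearMap.smul_apply,
    ContinuousLinearMap.comp_apply, ContinuousLinearMap.prod_apply,
    ContinuousLinearMap.id_apply, ContinuousLinearMap.smulRight_apply,
    fderivInnerCLM_apply, innerSL_apply_apply, PiLp.inner_apply, RCLike.inner_apply,
    Fin.sum_univ_three, PiLp.add_apply, PiLp.sub_apply, PiLp.smul_apply,
    EuclideanSpace.single_apply, smul_eq_mul, map_add, map_sub, map_smul,
    conj_trivial]
  simp only [Fin.isValue, if_true, if_false, show ((0:Fin 3) = 1) = False by simp,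
    show ((0:Fin 3) = 2) = False by simp, show ((1:Fin 3) = 0) = False by simp,
    show ((1:Fin 3) = 2) = False by simp, show ((2:Fin 3) = 0) = False by simp,
    show ((2:Fin 3) = 1) = False by simp, ite_true, ite_false, mul_one, mul_zero,
    zero_mul, one_mul, add_zero, zero_add]
  linear_combination (2*α) * hg1 - (2*α) * hg2 +
    (2*(κ*(μ 0*x 0+μ 1*x 1+μ 2*x 2)
        + 2*α*((γ₁ 0*x 0+γ₁ 1*x 1+γ₁ 2*x 2)^2 - (γ₂ 0*x 0+γ₂ 1*x 1+γ₂ 2*x 2)^2))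
      + 2*α*((γ₁ 0*x 0+γ₁ 1*x 1+γ₁ 2*x 2)^2 - (γ₂ 0*x 0+γ₂ 1*x 1+γ₂ 2*x 2)^2)) * hxx
end
end

section
/- Let C ⊆ ℝⁿ be a nonempty closed set, let x ∈ ℝⁿ with x ∉ C, and let x̃ ∈ C satisfy ‖x − x̃‖ = inf_{c ∈ C} ‖x − c‖. If the distance function d(y) := inf_{c ∈ C} ‖y − c‖ is differentiable at x, then its gradient at x equals the unit vector (x − x̃)/‖x − x̃‖. -/
open Real
open scoped RealInnerProductSpace

noncomputable section

/-- **Gradient of the distance function to a closed set:** if `xt` is a nearest point of the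
nonempty closed set `C` to `x ∉ C` and the distance function `y ↦ d(y, C)` is differentiable
at `x`, then its gradient at `x` is the unit vector `(x − xt)/‖x − xt‖`. -/
theorem gradient_infDist_eq_unit_direction
    {n : ℕ} (C : Set (EuclideanSpace ℝ (Fin n))) (hC : IsClosed C) (hCne : C.Nonempty)
    (x xt : EuclideanSpace ℝ (Fin n)) (hx : x ∉ C) (hxt : xt ∈ C)
    (hmin : ‖x - xt‖ = Metric.infDist x C)
    (hdiff : DifferentiableAt ℝ (fun y => Metric.infDist y C) x) :
    gradient (fun y => Metric.infDist y C) x = ‖x - xt‖⁻¹ • (x - xt) := by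
  set f := fun y : EuclideanSpace ℝ (Fin n) => Metric.infDist y C with hf
  set v : EuclideanSpace ℝ (Fin n) := x - xt with hv
  have hxne : x ≠ xt := fun h => hx (by rw [h]; exact hxt)
  have hvne : v ≠ 0 := sub_ne_zero.mpr hxne
  have hvpos : (0:ℝ) < ‖v‖ := norm_pos_iff.mpr hvne
  set g : EuclideanSpace ℝ (Fin n) := gradient f x with hg
  have htd : InnerProductSpace.toDual ℝ (EuclideanSpace ℝ (Fin n)) g = fderiv ℝ f x := by
    rw [hg, gradient, (InnerProductSpace.toDual ℝ _).apply_symm_apply]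
  have hginner : ∀ w, ⟪g, w⟫ = fderiv ℝ f x w := by
    intro w
    rw [← htd, InnerProductSpace.toDual_apply_apply]
  have hlip : LipschitzWith 1 f := Metric.lipschitz_infDist_pt C
  have hgnorm : ‖g‖ ≤ 1 := by
    have h1 : ‖fderiv ℝ f x‖ ≤ 1 := by
      simpa using norm_fderiv_le_of_lipschitz ℝ hlip
    calc ‖g‖ = ‖InnerProductSpace.toDual ℝ (EuclideanSpace ℝ (Fin n)) g‖ :=
          ((InnerProductSpace.toDual ℝ _).norm_map g).symm
      _ = ‖fderiv ℝ f x‖ := by rw [htd]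
      _ ≤ 1 := h1
  -- values on segment
  have hseg : ∀ s : ℝ, s ∈ Set.Icc (-1:ℝ) 0 → f (x + s • v) = (1 + s) * ‖v‖ := by
    intro s hs
    have h1 : (0:ℝ) ≤ 1 + s := by linarith [hs.1]
    have h2 : s ≤ 0 := hs.2
    have hle : f (x + s • v) ≤ (1 + s) * ‖v‖ := by
      have hd : dist (x + s • v) xt = (1 + s) * ‖v‖ := by
        rw [dist_eq_norm]
        have h3 : x + s • v - xt = (1 + s) • v := by rw [hv]; module
        rw [h3, norm_smul, Real.norm_eq_abs, abs_of_nonneg h1]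
      calc f (x + s • v) ≤ dist (x + s • v) xt := Metric.infDist_le_dist_of_mem hxt
        _ = (1 + s) * ‖v‖ := hd
    have hge : (1 + s) * ‖v‖ ≤ f (x + s • v) := by
      have hkey : f x ≤ f (x + s • v) + dist x (x + s • v) :=
        Metric.infDist_le_infDist_add_dist
      have hdx : dist x (x + s • v) = -s * ‖v‖ := by
        rw [dist_eq_norm]
        have h3 : x - (x + s • v) = (-s) • v := by module
        rw [h3, norm_smul, Real.norm_eq_abs, abs_of_nonneg (neg_nonneg.mpr h2)]
      have hfx : f x = ‖v‖ := by rw [hf]; exact hmin.symm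
      rw [hfx, hdx] at hkey
      linarith
    linarith
  -- derivative along v
  have hφ : HasDerivAt (fun s : ℝ => x + s • v) v 0 := by
    simpa using ((hasDerivAt_id (0:ℝ)).smul_const v).const_add x
  have h0 : x + (0:ℝ) • v = x := by simp
  have hF : HasFDerivAt f (fderiv ℝ f x) (x + (0:ℝ) • v) := by
    rw [h0]; exact hdiff.hasFDerivAt
  have hcomp : HasDerivAt (fun s : ℝ => f (x + s • v)) (fderiv ℝ f x v) 0 := by
    exact hF.comp_hasDerivAt 0 hφ
  have hcomp' : HasDerivWithinAt (fun s : ℝ => f (x + s • v)) (fderiv ℝ f x v) (Set.Iic 0) 0 :=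
    hcomp.hasDerivWithinAt
  have hlin : HasDerivWithinAt (fun s : ℝ => (1 + s) * ‖v‖) ‖v‖ (Set.Iic 0) 0 := by
    have h4 : HasDerivAt (fun s : ℝ => (1 + s) * ‖v‖) ‖v‖ 0 := by
      simpa using ((hasDerivAt_id (0:ℝ)).const_add 1).mul_const ‖v‖
    exact h4.hasDerivWithinAt
  have heq : HasDerivWithinAt (fun s : ℝ => f (x + s • v)) ‖v‖ (Set.Iic 0) 0 := by
    apply hlin.congr_of_eventuallyEq_of_mem ?_ (by simp)
    have hmem : Set.Ioi (-1:ℝ) ∈ nhdsWithin (0:ℝ) (Set.Iic 0) :=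
      nhdsWithin_le_nhds (Ioi_mem_nhds (by norm_num))
    filter_upwards [hmem, self_mem_nhdsWithin] with s hs1 hs2
    exact hseg s ⟨le_of_lt hs1, hs2⟩
  -- uniqueness of derivWithin
  have hud : UniqueDiffWithinAt ℝ (Set.Iic (0:ℝ)) 0 :=
    uniqueDiffOn_Iic 0 0 (by simp)
  have hder : fderiv ℝ f x v = ‖v‖ := by
    rw [← hcomp'.derivWithin hud, heq.derivWithin hud]
  -- equality case of Cauchy–Schwarz
  have hinner : ⟪g, v⟫ = ‖v‖ := by rw [hginner v, hder]
  have hexp : ‖g - ‖v‖⁻¹ • v‖ ^ 2 ≤ 0 := by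
    have hgg : ‖g‖ ^ 2 ≤ 1 := by
      have := pow_le_pow_left₀ (norm_nonneg g) hgnorm 2
      simpa using this
    have h5 : ‖g - ‖v‖⁻¹ • v‖ ^ 2 = ‖g‖ ^ 2 - 2 * ⟪g, ‖v‖⁻¹ • v⟫ + ‖‖v‖⁻¹ • v‖ ^ 2 := by
      rw [@norm_sub_sq_real]
    have h6 : ⟪g, ‖v‖⁻¹ • v⟫ = 1 := by
      rw [real_inner_smul_right, hinner]
      field_simp
    have h7 : ‖‖v‖⁻¹ • v‖ = 1 := by
      rw [norm_smul, Real.norm_eq_abs, abs_of_nonneg (inv_nonneg.mpr (norm_nonneg v))]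
      field_simp
    rw [h5, h6, h7]
    nlinarith
  have : g - ‖v‖⁻¹ • v = 0 := by
    have h9 := le_antisymm hexp (sq_nonneg _)
    have h8 : ‖g - ‖v‖⁻¹ • v‖ = 0 := by
      exact pow_eq_zero_iff two_ne_zero |>.mp h9
    exact norm_eq_zero.mp h8
  have : g = ‖v‖⁻¹ • v := by
    rwa [sub_eq_zero] at this
  exact this
end
end
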